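/- Let Ω be a proper subdomain with (Ω,k_Ω) C-Gromov hyperbolic geodesic, C ≥ 8. Fix x,y ∈ Ω, a quasihyperbolic geodesic γ_{xy} with x₀ ∈ γ_{xy}, a curve α from x to y, and θ > 1+C. Suppose z ∈ α and γ is a quasihyperbolic geodesic from x to z containing z₀ with k_Ω(x₀,z₀) = k_Ω(x₀,γ) ≥ θ, and suppose that for every w in the subarc α(z,y] and every quasihyperbolic geodesic γ_{xw} one has k_Ω(x₀,γ_{xw}) < θ. Then θ ≤ k_Ω(x₀,z₀) < 1 + θ + C. -/

import Mathlib

open Metric Set Real MeasureTheory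

noncomputable section

variable {X : Type*} [MetricSpace X]

/-- Distance from `z` to the complement of `Ω`; for `z` in an open set `Ω` this is the
distance to the boundary `∂Ω`. -/
def distCompl (Ω : Set X) (z : X) : ℝ := Metric.infDist z Ωᶜ

/-- `γ` restricted to `[0, L]` is a unit-speed (arclength parametrized) rectifiable curve
with values in `Ω`. -/
structure IsUnitSpeedIn (Ω : Set X) (γ : ℝ → X) (L : ℝ) : Prop where
  nonneg : 0 ≤ L
  mem : ∀ t ∈ Set.Icc (0:ℝ) L, γ t ∈ Ω
  unitSpeed : ∀ s ∈ Set.Icc (0:ℝ) L, ∀ t ∈ Set.Icc (0:ℝ) L, s ≤ t →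
    eVariationOn γ (Set.Icc s t) = ENNReal.ofReal (t - s)

/-- Quasihyperbolic length `∫_γ |dz| / d_Ω(z)` of a unit-speed curve in `Ω`
parametrized on `[0, L]`. -/
def qhLength (Ω : Set X) (γ : ℝ → X) (L : ℝ) : ℝ :=
  ∫ s in (0:ℝ)..L, 1 / distCompl Ω (γ s)

/-- Quasihyperbolic distance in `Ω`: infimum of quasihyperbolic lengths of rectifiable
(unit-speed parametrized) curves in `Ω` joining the two points. -/
def qhDist (Ω : Set X) (x y : X) : ℝ :=
  ⨅ p : {p : (ℝ → X) × ℝ // IsUnitSpeedIn Ω p.1 p.2 ∧ p.1 0 = x ∧ p.1 p.2 = y},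
    qhLength Ω p.1.1 p.1.2

/-- Inner (intrinsic) distance in `Ω`: infimum of lengths of rectifiable curves in `Ω`
joining the two points. -/
def innerDist (Ω : Set X) (x y : X) : ℝ :=
  ⨅ p : {p : (ℝ → X) × ℝ // IsUnitSpeedIn Ω p.1 p.2 ∧ p.1 0 = x ∧ p.1 p.2 = y},
    p.1.2

/-- A quasihyperbolic geodesic: a unit-speed curve in `Ω` each of whose subarcs realizes
the quasihyperbolic distance between its endpoints. -/
def IsQHGeodesic (Ω : Set X) (γ : ℝ → X) (L : ℝ) : Prop :=
  IsUnitSpeedIn Ω γ L ∧ ∀ s ∈ Set.Icc (0:ℝ) L, ∀ t ∈ Set.Icc (0:ℝ) L, s ≤ t →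
    (∫ u in s..t, 1 / distCompl Ω (γ u)) = qhDist Ω (γ s) (γ t)

/-- `(Ω, k_Ω)` is a geodesic space: any two points of `Ω` are joined by a
quasihyperbolic geodesic. -/
def QHGeodesicSpace (Ω : Set X) : Prop :=
  ∀ x ∈ Ω, ∀ y ∈ Ω, ∃ γ L, IsQHGeodesic Ω γ L ∧ γ 0 = x ∧ γ L = y

/-- `(Ω, k_Ω)` is `δ`-Gromov hyperbolic: geodesic triangles for the quasihyperbolic
metric are `δ`-thin. -/
def QHGromovHyperbolic (Ω : Set X) (δ : ℝ) : Prop :=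
  ∀ γ₁ L₁ γ₂ L₂ γ₃ L₃, IsQHGeodesic Ω γ₁ L₁ → IsQHGeodesic Ω γ₂ L₂ →
    IsQHGeodesic Ω γ₃ L₃ → γ₂ 0 = γ₁ 0 → γ₃ 0 = γ₁ L₁ → γ₂ L₂ = γ₃ L₃ →
    ∀ s ∈ Set.Icc (0:ℝ) L₁, ∃ u ∈ γ₂ '' Set.Icc (0:ℝ) L₂ ∪ γ₃ '' Set.Icc (0:ℝ) L₃,
      qhDist Ω (γ₁ s) u ≤ δ

/-- The `C`-Gehring–Hayman inequality: every quasihyperbolic geodesic has length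
at most `C` times the inner distance between its endpoints. -/
def GehringHayman (Ω : Set X) (C : ℝ) : Prop :=
  ∀ γ L, IsQHGeodesic Ω γ L → L ≤ C * innerDist Ω (γ 0) (γ L)

/-- The `C`-ball separation condition: for each quasihyperbolic geodesic `γ`, each point
`z` on `γ` and each curve `α` in `Ω` with the same endpoints, the inner-metric ball
`B_σ(z, C·d_Ω(z))` meets `α`. -/
def BallSeparation (Ω : Set X) (C : ℝ) : Prop :=
  ∀ γ L, IsQHGeodesic Ω γ L → ∀ s ∈ Set.Icc (0:ℝ) L,
    ∀ α M, IsUnitSpeedIn Ω α M → α 0 = γ 0 → α M = γ L →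
      ∃ t ∈ Set.Icc (0:ℝ) M, innerDist Ω (γ s) (α t) < C * distCompl Ω (γ s)

/-- `X` is a length space: the distance between any two points is the infimum of lengths
of curves joining them. -/
def IsLengthSpace (X : Type*) [MetricSpace X] : Prop :=
  ∀ x y : X, ∀ ε > 0, ∃ γ : ℝ → X, ∃ L, IsUnitSpeedIn (Set.univ : Set X) γ L ∧
    γ 0 = x ∧ γ L = y ∧ L ≤ dist x y + ε

/-- `X` is `Q`-doubling: every `r/2`-separated subset of a ball of radius `r` has at
most `Q` points. -/
def QDoubling (X : Type*) [MetricSpace X] (Q : ℝ) : Prop :=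
  ∀ x : X, ∀ r : ℝ, ∀ S : Finset X, (↑S : Set X) ⊆ Metric.ball x r →
    (∀ a ∈ S, ∀ b ∈ S, a ≠ b → r / 2 ≤ dist a b) → (S.card : ℝ) ≤ Q

/-- `Ω` is a proper subdomain: a nonempty, open, connected set different from the whole
space. -/
def IsProperSubdomain (Ω : Set X) : Prop :=
  IsOpen Ω ∧ IsConnected Ω ∧ Ω ≠ Set.univ

/-- The `c₀`-LLC-2 condition: points of `Ω` outside a closed ball `B̄(x, r)` can be
joined by a curve in `Ω` outside `B̄(x, r/c₀)`. -/
def LLC2 (Ω : Set X) (c₀ : ℝ) : Prop :=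
  ∀ x : X, ∀ r : ℝ, ∀ a ∈ Ω \ Metric.closedBall x r, ∀ b ∈ Ω \ Metric.closedBall x r,
    ∃ γ L, IsUnitSpeedIn (Ω \ Metric.closedBall x (r / c₀)) γ L ∧ γ 0 = a ∧ γ L = b

section Helpers

variable {Ω : Set X}

lemma IsUnitSpeedIn.lipschitzOnWith {γ : ℝ → X} {L : ℝ} (h : IsUnitSpeedIn Ω γ L) :
    LipschitzOnWith 1 γ (Set.Icc 0 L) := by
  intro s hs t ht
  wlog hst : s ≤ t generalizing s t
  · rw [edist_comm, edist_comm (s : ℝ) t]; exact this ht hs (le_of_not_ge hst)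
  calc edist (γ s) (γ t) ≤ eVariationOn γ (Set.Icc s t) :=
        eVariationOn.edist_le γ (left_mem_Icc.2 hst) (right_mem_Icc.2 hst)
    _ = ENNReal.ofReal (t - s) := h.unitSpeed s hs t ht hst
    _ ≤ 1 * edist s t := by
        rw [one_mul, edist_dist, Real.dist_eq, abs_sub_comm]
        exact ENNReal.ofReal_le_ofReal (le_abs_self _)

lemma distCompl_pos (hΩo : IsOpen Ω) (hne : Ωᶜ.Nonempty) {z : X} (hz : z ∈ Ω) :
    0 < distCompl Ω z :=
  (hΩo.isClosed_compl.notMem_iff_infDist_pos hne).1 (by simpa using hz)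

lemma qh_integrand_contOn (hΩo : IsOpen Ω) (hne : Ωᶜ.Nonempty) {γ : ℝ → X} {L : ℝ}
    (h : IsUnitSpeedIn Ω γ L) :
    ContinuousOn (fun s => 1 / distCompl Ω (γ s)) (Set.Icc 0 L) := by
  have hγc : ContinuousOn γ (Set.Icc 0 L) := h.lipschitzOnWith.continuousOn
  have hd : ContinuousOn (fun s => distCompl Ω (γ s)) (Set.Icc 0 L) :=
    (Metric.continuous_infDist_pt _).comp_continuousOn hγc
  exact continuousOn_const.div hd fun s hs => (distCompl_pos hΩo hne (h.mem s hs)).ne'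

lemma qh_intervalIntegrable (hΩo : IsOpen Ω) (hne : Ωᶜ.Nonempty) {γ : ℝ → X} {L : ℝ}
    (h : IsUnitSpeedIn Ω γ L) {a b : ℝ} (ha : a ∈ Set.Icc (0:ℝ) L) (hb : b ∈ Set.Icc (0:ℝ) L)
    (hab : a ≤ b) :
    IntervalIntegrable (fun s => 1 / distCompl Ω (γ s)) volume a b :=
  ContinuousOn.intervalIntegrable_of_Icc hab
    ((qh_integrand_contOn hΩo hne h).mono (Set.Icc_subset_Icc ha.1 hb.2))

lemma qhLength_nonneg {γ : ℝ → X} {L : ℝ} (hL : 0 ≤ L) : 0 ≤ qhLength Ω γ L :=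
  intervalIntegral.integral_nonneg hL fun _ _ => div_nonneg zero_le_one Metric.infDist_nonneg

lemma qhDist_bddBelow (a b : X) :
    BddBelow (Set.range fun p :
        {p : (ℝ → X) × ℝ // IsUnitSpeedIn Ω p.1 p.2 ∧ p.1 0 = a ∧ p.1 p.2 = b} =>
      qhLength Ω p.1.1 p.1.2) := by
  refine ⟨0, ?_⟩
  rintro _ ⟨p, rfl⟩
  exact qhLength_nonneg p.2.1.nonneg

lemma qhDist_le_qhLength {γ : ℝ → X} {L : ℝ} (h : IsUnitSpeedIn Ω γ L) {a b : X}
    (h0 : γ 0 = a) (hL : γ L = b) : qhDist Ω a b ≤ qhLength Ω γ L :=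
  ciInf_le (qhDist_bddBelow a b) ⟨(γ, L), h, h0, hL⟩

lemma qhDist_nonneg {a b : X} (hab : ∃ γ L, IsUnitSpeedIn Ω γ L ∧ γ 0 = a ∧ γ L = b) :
    0 ≤ qhDist Ω a b := by
  obtain ⟨γ, L, h1, h2, h3⟩ := hab
  haveI : Nonempty {p : (ℝ → X) × ℝ // IsUnitSpeedIn Ω p.1 p.2 ∧ p.1 0 = a ∧ p.1 p.2 = b} :=
    ⟨⟨(γ, L), h1, h2, h3⟩⟩
  exact le_ciInf fun p => qhLength_nonneg p.2.1.nonneg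

lemma isUnitSpeedIn_const {y : X} (hy : y ∈ Ω) : IsUnitSpeedIn Ω (fun _ => y) 0 := by
  refine ⟨le_refl 0, fun t _ => hy, ?_⟩
  intro s hs t ht hst
  have hs0 : s = 0 := le_antisymm hs.2 hs.1
  have ht0 : t = 0 := le_antisymm ht.2 ht.1
  subst hs0; subst ht0
  rw [eVariationOn.subsingleton _ (Set.Icc_self (0:ℝ) ▸ Set.subsingleton_singleton)]
  simp

lemma qhDist_self {y : X} (hy : y ∈ Ω) : qhDist Ω y y = 0 := by
  have h1 : qhDist Ω y y ≤ 0 := by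
    have := qhDist_le_qhLength (isUnitSpeedIn_const hy) rfl rfl
    simpa [qhLength] using this
  have h2 : 0 ≤ qhDist Ω y y := qhDist_nonneg ⟨_, _, isUnitSpeedIn_const hy, rfl, rfl⟩
  linarith

lemma isQHGeodesic_const {y : X} (hy : y ∈ Ω) : IsQHGeodesic Ω (fun _ => y) 0 := by
  refine ⟨isUnitSpeedIn_const hy, ?_⟩
  intro s hs t ht hst
  have hs0 : s = 0 := le_antisymm hs.2 hs.1
  have ht0 : t = 0 := le_antisymm ht.2 ht.1
  subst hs0; subst ht0
  rw [intervalIntegral.integral_same, qhDist_self hy]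

lemma isUnitSpeedIn_concat {γ₁ γ₂ : ℝ → X} {L₁ L₂ : ℝ}
    (h1 : IsUnitSpeedIn Ω γ₁ L₁) (h2 : IsUnitSpeedIn Ω γ₂ L₂) (hj : γ₁ L₁ = γ₂ 0) :
    IsUnitSpeedIn Ω (fun s => if s ≤ L₁ then γ₁ s else γ₂ (s - L₁)) (L₁ + L₂) := by
  have hL1 := h1.nonneg
  have hL2 := h2.nonneg
  set δ : ℝ → X := fun s => if s ≤ L₁ then γ₁ s else γ₂ (s - L₁) with hδdef
  have e1 : Set.EqOn δ γ₁ (Set.Icc 0 L₁) := fun s hs => if_pos hs.2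
  have e2 : Set.EqOn δ (fun s => γ₂ (s - L₁)) (Set.Icc L₁ (L₁ + L₂)) := by
    intro s hs
    by_cases h : s ≤ L₁
    · have hsL : s = L₁ := le_antisymm h hs.1
      simp [δ, hsL, hj]
    · simp [δ, h]
  have piece2 : ∀ a b, L₁ ≤ a → a ≤ b → b ≤ L₁ + L₂ →
      eVariationOn δ (Set.Icc a b) = ENNReal.ofReal (b - a) := by
    intro a b hLa hab hb
    rw [eVariationOn.eq_of_eqOn (e2.mono (Set.Icc_subset_Icc hLa hb))]
    rw [show (fun s => γ₂ (s - L₁)) = γ₂ ∘ (fun s => s - L₁) from rfl,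
      eVariationOn.comp_eq_of_monotoneOn γ₂ _
        (fun u _ v _ huv => sub_le_sub_right huv L₁),
      Set.image_sub_const_Icc]
    have := h2.unitSpeed (a - L₁) ⟨by linarith, by linarith⟩ (b - L₁)
      ⟨by linarith, by linarith⟩ (by linarith)
    rw [this]
    congr 1
    ring
  refine ⟨by linarith, ?_, ?_⟩
  · intro t ht
    by_cases h : t ≤ L₁
    · simpa [δ, h] using h1.mem t ⟨ht.1, h⟩
    · simpa [δ, h] using h2.mem (t - L₁) ⟨by linarith [not_le.1 h], by linarith [ht.2]⟩
  · intro s hs t ht hst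
    rcases le_total t L₁ with htL | hLt
    · rw [eVariationOn.eq_of_eqOn (e1.mono (Set.Icc_subset_Icc hs.1 htL))]
      exact h1.unitSpeed s ⟨hs.1, hst.trans htL⟩ t ⟨hs.1.trans hst, htL⟩ hst
    · rcases le_total L₁ s with hLs | hsL
      · exact piece2 s t hLs hst ht.2
      · have i1 : Set.Icc s t ∩ Set.Icc s L₁ = Set.Icc s L₁ := by
          rw [Set.Icc_inter_Icc, sup_idem, inf_eq_right.mpr hLt]
        have i2 : Set.Icc s t ∩ Set.Icc L₁ t = Set.Icc L₁ t := by
          rw [Set.Icc_inter_Icc, inf_idem, sup_eq_right.mpr hsL]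
        have i3 : Set.Icc s t ∩ Set.Icc s t = Set.Icc s t := Set.inter_self _
        have split := eVariationOn.Icc_add_Icc δ (s := Set.Icc s t) hsL hLt ⟨hsL, hLt⟩
        rw [i1, i2, i3] at split
        have p1 : eVariationOn δ (Set.Icc s L₁) = ENNReal.ofReal (L₁ - s) := by
          rw [eVariationOn.eq_of_eqOn (e1.mono (Set.Icc_subset_Icc hs.1 le_rfl))]
          exact h1.unitSpeed s ⟨hs.1, hsL⟩ L₁ ⟨hL1, le_rfl⟩ hsL
        have p2 : eVariationOn δ (Set.Icc L₁ t) = ENNReal.ofReal (t - L₁) :=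
          piece2 L₁ t le_rfl hLt ht.2
        rw [← split, p1, p2, ← ENNReal.ofReal_add (by linarith) (by linarith)]
        congr 1
        ring

lemma qhLength_concat (hΩo : IsOpen Ω) (hne : Ωᶜ.Nonempty) {γ₁ γ₂ : ℝ → X} {L₁ L₂ : ℝ}
    (h1 : IsUnitSpeedIn Ω γ₁ L₁) (h2 : IsUnitSpeedIn Ω γ₂ L₂) (hj : γ₁ L₁ = γ₂ 0) :
    qhLength Ω (fun s => if s ≤ L₁ then γ₁ s else γ₂ (s - L₁)) (L₁ + L₂)
      = qhLength Ω γ₁ L₁ + qhLength Ω γ₂ L₂ := by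
  have hL1 := h1.nonneg
  have hL2 := h2.nonneg
  set δ : ℝ → X := fun s => if s ≤ L₁ then γ₁ s else γ₂ (s - L₁) with hδdef
  have e1 : Set.EqOn (fun s => 1 / distCompl Ω (δ s)) (fun s => 1 / distCompl Ω (γ₁ s))
      (Set.Icc 0 L₁) := by
    intro s hs
    simp only [δ, if_pos hs.2]
  have e2 : Set.EqOn (fun s => 1 / distCompl Ω (δ s)) (fun s => 1 / distCompl Ω (γ₂ (s - L₁)))
      (Set.Icc L₁ (L₁ + L₂)) := by
    intro s hs
    by_cases h : s ≤ L₁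
    · have hsL : s = L₁ := le_antisymm h hs.1
      simp [δ, hsL, hj]
    · simp [δ, h]
  have cont1 : ContinuousOn (fun s => 1 / distCompl Ω (δ s)) (Set.Icc 0 L₁) :=
    (qh_integrand_contOn hΩo hne h1).congr e1
  have cont2 : ContinuousOn (fun s => 1 / distCompl Ω (δ s)) (Set.Icc L₁ (L₁ + L₂)) := by
    refine ContinuousOn.congr ?_ e2
    exact (qh_integrand_contOn hΩo hne h2).comp ((continuous_sub_right L₁).continuousOn)
      (fun s hs => ⟨by linarith [hs.1], by linarith [hs.2]⟩)
  have int1 : IntervalIntegrable (fun s => 1 / distCompl Ω (δ s)) volume 0 L₁ :=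
    cont1.intervalIntegrable_of_Icc hL1
  have int2 : IntervalIntegrable (fun s => 1 / distCompl Ω (δ s)) volume L₁ (L₁ + L₂) :=
    cont2.intervalIntegrable_of_Icc (by linarith)
  have hsplit := intervalIntegral.integral_add_adjacent_intervals int1 int2
  have hq1 : (∫ s in (0:ℝ)..L₁, 1 / distCompl Ω (δ s)) = qhLength Ω γ₁ L₁ :=
    intervalIntegral.integral_congr (by rwa [Set.uIcc_of_le hL1])
  have hq2 : (∫ s in L₁..(L₁ + L₂), 1 / distCompl Ω (δ s)) = qhLength Ω γ₂ L₂ := by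
    rw [intervalIntegral.integral_congr (g := fun s => 1 / distCompl Ω (γ₂ (s - L₁)))
      (by rwa [Set.uIcc_of_le (by linarith : L₁ ≤ L₁ + L₂)])]
    rw [intervalIntegral.integral_comp_sub_right (fun s => 1 / distCompl Ω (γ₂ s)) L₁]
    simp [qhLength]
  calc qhLength Ω δ (L₁ + L₂)
      = (∫ s in (0:ℝ)..L₁, 1 / distCompl Ω (δ s))
        + ∫ s in L₁..(L₁ + L₂), 1 / distCompl Ω (δ s) := (hsplit).symm
    _ = qhLength Ω γ₁ L₁ + qhLength Ω γ₂ L₂ := by rw [hq1, hq2]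

lemma qhDist_triangle (hΩo : IsOpen Ω) (hne : Ωᶜ.Nonempty) (hGeo : QHGeodesicSpace Ω)
    {a b c : X} (ha : a ∈ Ω) (hb : b ∈ Ω) (hc : c ∈ Ω) :
    qhDist Ω a c ≤ qhDist Ω a b + qhDist Ω b c := by
  haveI n1 : Nonempty {p : (ℝ → X) × ℝ // IsUnitSpeedIn Ω p.1 p.2 ∧ p.1 0 = a ∧ p.1 p.2 = b} := by
    obtain ⟨γ, L, hgd, h0, hL⟩ := hGeo a ha b hb
    exact ⟨⟨(γ, L), hgd.1, h0, hL⟩⟩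
  haveI n2 : Nonempty {p : (ℝ → X) × ℝ // IsUnitSpeedIn Ω p.1 p.2 ∧ p.1 0 = b ∧ p.1 p.2 = c} := by
    obtain ⟨γ, L, hgd, h0, hL⟩ := hGeo b hb c hc
    exact ⟨⟨(γ, L), hgd.1, h0, hL⟩⟩
  refine le_ciInf_add_ciInf ?_
  rintro ⟨⟨γ₁, L₁⟩, hp1, e10, e1L⟩ ⟨⟨γ₂, L₂⟩, hp2, e20, e2L⟩
  dsimp only at hp1 e10 e1L hp2 e20 e2L ⊢
  have hj : γ₁ L₁ = γ₂ 0 := by rw [e1L, e20]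
  have husi := isUnitSpeedIn_concat hp1 hp2 hj
  have hend0 : (fun s => if s ≤ L₁ then γ₁ s else γ₂ (s - L₁)) 0 = a := by
    simp only [if_pos hp1.nonneg]; exact e10
  have hendL : (fun s => if s ≤ L₁ then γ₁ s else γ₂ (s - L₁)) (L₁ + L₂) = c := by
    by_cases h : L₁ + L₂ ≤ L₁
    · have hL2 : L₂ = 0 := le_antisymm (by linarith) hp2.nonneg
      simp only [if_pos h]
      rw [show L₁ + L₂ = L₁ by rw [hL2]; ring, hj, ← hL2, e2L]
    · simp only [if_neg h, add_sub_cancel_left, e2L]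
  calc qhDist Ω a c ≤ qhLength Ω (fun s => if s ≤ L₁ then γ₁ s else γ₂ (s - L₁)) (L₁ + L₂) :=
        qhDist_le_qhLength husi hend0 hendL
    _ = qhLength Ω γ₁ L₁ + qhLength Ω γ₂ L₂ := qhLength_concat hΩo hne hp1 hp2 hj

lemma isUnitSpeedIn_subarc {α : ℝ → X} {M : ℝ} (h : IsUnitSpeedIn Ω α M) {a b : ℝ}
    (ha : 0 ≤ a) (hab : a ≤ b) (hb : b ≤ M) :
    IsUnitSpeedIn Ω (fun s => α (a + s)) (b - a) := by
  refine ⟨by linarith, fun t ht => h.mem (a + t) ⟨by linarith [ht.1], by linarith [ht.2]⟩, ?_⟩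
  intro s hs t ht hst
  rw [show (fun s => α (a + s)) = α ∘ (fun s => a + s) from rfl,
    eVariationOn.comp_eq_of_monotoneOn α (fun s => a + s)
      (by intro u _ v _ huv; show a + u ≤ a + v; linarith),
    Set.image_const_add_Icc]
  have := h.unitSpeed (a + s) ⟨by linarith [hs.1], by linarith [hs.2]⟩ (a + t)
    ⟨by linarith [ht.1], by linarith [ht.2]⟩ (by linarith)
  rw [this]
  congr 1
  ring

lemma isUnitSpeedIn_revsubarc {α : ℝ → X} {M : ℝ} (h : IsUnitSpeedIn Ω α M) {a b : ℝ}
    (ha : 0 ≤ a) (hab : a ≤ b) (hb : b ≤ M) :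
    IsUnitSpeedIn Ω (fun s => α (b - s)) (b - a) := by
  refine ⟨by linarith, fun t ht => h.mem (b - t) ⟨by linarith [ht.2], by linarith [ht.1]⟩, ?_⟩
  intro s hs t ht hst
  rw [show (fun s => α (b - s)) = α ∘ (fun s => b - s) from rfl,
    eVariationOn.comp_eq_of_antitoneOn α _ (fun u _ v _ huv => sub_le_sub_left huv b),
    Set.image_const_sub_Icc]
  have := h.unitSpeed (b - t) ⟨by linarith [ht.2], by linarith [ht.1]⟩ (b - s)
    ⟨by linarith [hs.2], by linarith [hs.1]⟩ (by linarith)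
  rw [this]
  congr 1
  ring

lemma qhLength_le_of_bound (hΩo : IsOpen Ω) (hne : Ωᶜ.Nonempty) {γ : ℝ → X} {L : ℝ}
    (h : IsUnitSpeedIn Ω γ L) {B : ℝ}
    (hB : ∀ s ∈ Set.Icc (0:ℝ) L, 1 / distCompl Ω (γ s) ≤ B) :
    qhLength Ω γ L ≤ L * B := by
  have hL := h.nonneg
  calc qhLength Ω γ L ≤ ∫ _ in (0:ℝ)..L, B := by
        refine intervalIntegral.integral_mono_on hL
          (qh_intervalIntegrable hΩo hne h (Set.left_mem_Icc.2 hL) (Set.right_mem_Icc.2 hL) hL)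
          intervalIntegrable_const ?_
        intro s hs
        exact hB s hs
    _ = L * B := by simp [mul_comm]

lemma qhDist_point_to_end (hΩo : IsOpen Ω) (hne : Ωᶜ.Nonempty) {σ : ℝ → X} {Lσ : ℝ}
    (hσ : IsQHGeodesic Ω σ Lσ) {r : ℝ} (hr : r ∈ Set.Icc (0:ℝ) Lσ) :
    qhDist Ω (σ r) (σ Lσ) ≤ qhDist Ω (σ 0) (σ Lσ) := by
  have hL : (0:ℝ) ≤ Lσ := hσ.1.nonneg
  have i1 := qh_intervalIntegrable hΩo hne hσ.1 (Set.left_mem_Icc.2 hL) hr hr.1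
  have i2 := qh_intervalIntegrable hΩo hne hσ.1 hr (Set.right_mem_Icc.2 hL) hr.2
  have e1 := hσ.2 r hr Lσ (Set.right_mem_Icc.2 hL) hr.2
  have e2 := hσ.2 0 (Set.left_mem_Icc.2 hL) Lσ (Set.right_mem_Icc.2 hL) hL
  have hadd := intervalIntegral.integral_add_adjacent_intervals i1 i2
  have hpos : 0 ≤ ∫ u in (0:ℝ)..r, 1 / distCompl Ω (σ u) :=
    intervalIntegral.integral_nonneg hr.1 fun _ _ => div_nonneg zero_le_one Metric.infDist_nonneg
  rw [← e1, ← e2]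
  linarith [hadd]

end Helpers

/-- Lemma 4.3: for a curve of the class `P_α^{γ_{xx₀y}}(θ)`, the
distinguished point `z₀` satisfies `θ ≤ k_Ω(x₀, z₀) < 1 + θ + C`. -/
theorem class_P_distance_bound (Ω : Set X) (hΩ : IsProperSubdomain Ω)
    (C : ℝ) (hC : 8 ≤ C) (hGeo : QHGeodesicSpace Ω) (hHyp : QHGromovHyperbolic Ω C)
    (x y : X) (hx : x ∈ Ω) (hy : y ∈ Ω)
    (γ : ℝ → X) (L : ℝ) (hγ : IsQHGeodesic Ω γ L) (hγ0 : γ 0 = x) (hγL : γ L = y)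
    (s₀ : ℝ) (hs₀ : s₀ ∈ Set.Icc (0:ℝ) L)
    (α : ℝ → X) (M : ℝ) (hα : IsUnitSpeedIn Ω α M) (hα0 : α 0 = x) (hαM : α M = y)
    (θ : ℝ) (hθ : 1 + C < θ)
    (tz : ℝ) (htz : tz ∈ Set.Icc (0:ℝ) M)
    (g : ℝ → X) (Lg : ℝ) (hg : IsQHGeodesic Ω g Lg)
    (hg0 : g 0 = x) (hgL : g Lg = α tz)
    (u : ℝ) (hu : u ∈ Set.Icc (0:ℝ) Lg)
    (hge : θ ≤ qhDist Ω (γ s₀) (g u))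
    (hmin : ∀ v ∈ Set.Icc (0:ℝ) Lg, qhDist Ω (γ s₀) (g u) ≤ qhDist Ω (γ s₀) (g v))
    (hlast : ∀ t ∈ Set.Ioc tz M, ∀ h : ℝ → X, ∀ Lh : ℝ, IsQHGeodesic Ω h Lh →
      h 0 = x → h Lh = α t →
      ∃ v ∈ Set.Icc (0:ℝ) Lh, qhDist Ω (γ s₀) (h v) < θ) :
    θ ≤ qhDist Ω (γ s₀) (g u) ∧ qhDist Ω (γ s₀) (g u) < 1 + θ + C := by
  obtain ⟨hΩo, hconn, hne'⟩ := hΩ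
  have hne : Ωᶜ.Nonempty := Set.nonempty_compl.mpr hne'
  refine ⟨hge, ?_⟩
  have hx₀Ω : γ s₀ ∈ Ω := hγ.1.mem s₀ hs₀
  have hLg0 : (0:ℝ) ≤ Lg := hg.1.nonneg
  by_cases htzM : tz < M
  · -- main case : `tz < M`
    have hM0 : (0:ℝ) ≤ M := hα.nonneg
    have hcont : ContinuousOn (fun s => 1 / distCompl Ω (α s)) (Set.Icc 0 M) :=
      qh_integrand_contOn hΩo hne hα
    obtain ⟨s₁, hs₁, hs₁max⟩ :=
      isCompact_Icc.exists_isMaxOn ⟨0, Set.left_mem_Icc.2 hM0⟩ hcont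
    set B := max (1 / distCompl Ω (α s₁)) 1 with hBdef
    have hB1 : (1:ℝ) ≤ B := le_max_right _ _
    have hB0 : (0:ℝ) < B := lt_of_lt_of_le one_pos hB1
    have hBb : ∀ s ∈ Set.Icc (0:ℝ) M, 1 / distCompl Ω (α s) ≤ B :=
      fun s hs => (hs₁max hs).trans (le_max_left _ _)
    set t := min M (tz + 1 / (2 * B)) with htdef
    have htlt : tz < t := lt_min htzM (lt_add_of_pos_right tz (by positivity))
    have htM : t ≤ M := min_le_left _ _
    have ht0 : 0 ≤ t := htz.1.trans htlt.le
    have htsub : t - tz ≤ 1 / (2 * B) := by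
      have := min_le_right M (tz + 1 / (2 * B))
      linarith
    -- the two short arcs of `α` between `tz` and `t`
    have hsub : IsUnitSpeedIn Ω (fun s => α (tz + s)) (t - tz) :=
      isUnitSpeedIn_subarc hα htz.1 htlt.le htM
    have hlenbd : (t - tz) * B ≤ 1 / 2 := by
      have h1 : (t - tz) * B ≤ (1 / (2 * B)) * B := mul_le_mul_of_nonneg_right htsub hB0.le
      have h2 : (1 / (2 * B)) * B = 1 / 2 := by field_simp
      linarith
    have hd1 : qhDist Ω (α tz) (α t) ≤ 1 / 2 := by
      have hle : qhDist Ω (α tz) (α t) ≤ qhLength Ω (fun s => α (tz + s)) (t - tz) :=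
        qhDist_le_qhLength hsub (by simp) (by simp)
      have hlen : qhLength Ω (fun s => α (tz + s)) (t - tz) ≤ (t - tz) * B := by
        refine qhLength_le_of_bound hΩo hne hsub ?_
        intro s hs
        exact hBb (tz + s) ⟨by linarith [hs.1, htz.1], by linarith [hs.2]⟩
      linarith
    have hrev : IsUnitSpeedIn Ω (fun s => α (t - s)) (t - tz) :=
      isUnitSpeedIn_revsubarc hα htz.1 htlt.le htM
    have hd2 : qhDist Ω (α t) (α tz) ≤ 1 / 2 := by
      have hle : qhDist Ω (α t) (α tz) ≤ qhLength Ω (fun s => α (t - s)) (t - tz) :=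
        qhDist_le_qhLength hrev (by simp) (by simp)
      have hlen : qhLength Ω (fun s => α (t - s)) (t - tz) ≤ (t - tz) * B := by
        refine qhLength_le_of_bound hΩo hne hrev ?_
        intro s hs
        exact hBb (t - s) ⟨by linarith [hs.2, htz.1], by linarith [hs.1, htM]⟩
      linarith
    have hαtΩ : α t ∈ Ω := hα.mem t ⟨ht0, htM⟩
    have hαtzΩ : α tz ∈ Ω := hα.mem tz ⟨htz.1, htz.2⟩
    obtain ⟨h, Lh, hh, hh0, hhL⟩ := hGeo x hx (α t) hαtΩ
    obtain ⟨v, hv, hvθ⟩ := hlast t ⟨htlt, htM⟩ h Lh hh hh0 hhL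
    obtain ⟨σ, Lσ, hσ, hσ0, hσL⟩ := hGeo (α t) hαtΩ (α tz) hαtzΩ
    obtain ⟨w, hw, hwC⟩ := hHyp h Lh g Lg σ Lσ hh hg hσ (hg0.trans hh0.symm)
      (hσ0.trans hhL.symm) (hgL.trans hσL.symm) v hv
    have hhvΩ : h v ∈ Ω := hh.1.mem v hv
    rcases hw with ⟨r, hr, rfl⟩ | ⟨r, hr, rfl⟩
    · -- the near point lies on `g`
      have tri := qhDist_triangle hΩo hne hGeo hx₀Ω hhvΩ (hg.1.mem r hr)
      have hm := hmin r hr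
      linarith
    · -- the near point lies on `σ`
      have hσrΩ : σ r ∈ Ω := hσ.1.mem r hr
      have t1 := qhDist_triangle hΩo hne hGeo hx₀Ω hσrΩ hαtzΩ
      have t2 := qhDist_triangle hΩo hne hGeo hx₀Ω hhvΩ hσrΩ
      have hend : qhDist Ω (σ r) (α tz) ≤ 1 / 2 := by
        have hpe := qhDist_point_to_end hΩo hne hσ hr
        rw [hσ0, hσL] at hpe
        linarith
      have hmLg := hmin Lg ⟨hLg0, le_rfl⟩
      rw [hgL] at hmLg
      linarith
  · -- degenerate case `tz = M`: contradiction with `hmin`/`hge`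
    exfalso
    have htzeq : tz = M := le_antisymm htz.2 (not_lt.1 htzM)
    have hgLy : g Lg = y := by rw [hgL, htzeq, hαM]
    obtain ⟨w, hw, hwC⟩ := hHyp γ L g Lg (fun _ => y) 0 hγ hg (isQHGeodesic_const hy)
      (hg0.trans hγ0.symm) hγL.symm (by simpa using hgLy) s₀ hs₀
    have hwg : ∃ r ∈ Set.Icc (0:ℝ) Lg, w = g r := by
      rcases hw with ⟨r, hr, hwr⟩ | ⟨r, hr, hwr⟩
      · exact ⟨r, hr, hwr.symm⟩
      · refine ⟨Lg, ⟨hLg0, le_rfl⟩, ?_⟩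
        rw [← hwr, hgLy]
    obtain ⟨r, hr, rfl⟩ := hwg
    have hm := hmin r hr
    linarith
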